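/- Minkowski's theorem: for each n there exists M(n) ∈ ℕ such that every finite subgroup of GL_n(ℚ) has order at most M(n); that is, GL_n(ℚ) has bounded finite subgroups. -/

import Mathlib

/-- `G` is Jordan with constant `J`: every finite subgroup of `G` contains a
normal abelian subgroup of index at most `J`. -/
def JordanGroupWith (G : Type*) [Group G] (J : ℕ) : Prop :=
  ∀ H : Subgroup G, Finite H →
    ∃ A : Subgroup H, A.Normal ∧ (∀ x y : A, x * y = y * x) ∧ A.index ≤ J

/-- `G` is Jordan. -/
def JordanGroup (G : Type*) [Group G] : Prop := ∃ J : ℕ, JordanGroupWith G J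

/-- Every finite subgroup of `G` has order at most `B`. -/
def HasBoundedFiniteSubgroupsWith (G : Type*) [Group G] (B : ℕ) : Prop :=
  ∀ H : Subgroup G, Finite H → Nat.card H ≤ B

/-- `G` has bounded finite subgroups. -/
def HasBoundedFiniteSubgroups (G : Type*) [Group G] : Prop :=
  ∃ B : ℕ, HasBoundedFiniteSubgroupsWith G B


section Minkowski

open Finset Module

variable {ι : Type*} [Fintype ι] [DecidableEq ι]


/-- Reduction mod `m` of an integer matrix. -/
noncomputable def redMap (ι : Type*) [Fintype ι] [DecidableEq ι] (m : ℕ) :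
    Matrix ι ι ℤ →+* Matrix ι ι (ZMod m) :=
  (Int.castRingHom (ZMod m)).mapMatrix

lemma redMap_eq_one_iff (m : ℕ) (A : Matrix ι ι ℤ) :
    redMap ι m A = 1 ↔ ∀ i j, (m : ℤ) ∣ (A - 1) i j := by
  constructor
  · intro h i j
    have := congrFun (congrFun h i) j
    rw [← ZMod.intCast_zmod_eq_zero_iff_dvd]
    simp only [Matrix.sub_apply, Int.cast_sub]
    have h1 : (redMap ι m A) i j = ((A i j : ℤ) : ZMod m) := rfl
    rw [h1] at this
    rw [this]
    by_cases hij : i = j <;> simp [Matrix.one_apply, hij]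
  · intro h
    ext i j
    have := h i j
    rw [← ZMod.intCast_zmod_eq_zero_iff_dvd] at this
    simp only [Matrix.sub_apply, Int.cast_sub] at this
    have h1 : (redMap ι m A) i j = ((A i j : ℤ) : ZMod m) := rfl
    rw [h1]
    by_cases hij : i = j <;> simp [Matrix.one_apply, hij] at this ⊢ <;> linear_combination (norm := ring_nf) this

lemma mul_natCast_smul (X : Matrix ι ι ℤ) (c : ℕ) :
    X * (c : Matrix ι ι ℤ) = (c : ℤ) • X := by
  rw [← Matrix.diagonal_natCast]
  ext i j
  simp [Matrix.mul_diagonal, mul_comm]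

lemma step {q r : ℕ} (hq : q.Prime) (hr : 1 ≤ r) (C : Matrix ι ι ℤ)
    (hpow : (1 + (3:ℤ)^r • C) ^ q = 1) (i j : ι) : (3:ℤ) ∣ C i j := by
  set N : Matrix ι ι ℤ := (3:ℤ)^r • C with hN
  have e1 : (1 : Matrix ι ι ℤ)
      = ∑ m ∈ Finset.range (q+1), ((q.choose m : ℤ) * 3^(r*m)) • C^m := by
    calc (1 : Matrix ι ι ℤ) = (N + 1)^q := by rw [add_comm, hpow]
    _ = ∑ m ∈ Finset.range (q+1), N^m * 1^(q-m) * (q.choose m : Matrix ι ι ℤ) :=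
        (Commute.one_right N).add_pow q
    _ = _ := by
        refine Finset.sum_congr rfl fun m _ => ?_
        rw [one_pow, mul_one, mul_natCast_smul, hN, smul_pow, ← pow_mul, smul_smul]
  obtain ⟨q', rfl⟩ : ∃ q', q = q' + 1 := ⟨q - 1, (Nat.succ_pred_eq_of_pos hq.pos).symm⟩
  rw [Finset.sum_range_succ'] at e1
  simp only [Nat.mul_zero, pow_zero, Nat.choose_zero_right, Nat.cast_one, one_mul, one_smul,
    pow_zero] at e1
  have e2 : (∑ m ∈ Finset.range (q'+1), (((q'+1).choose (m+1) : ℤ) * 3^(r*(m+1))) • C^(m+1))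
      = 0 := by
    have h := e1.symm
    rwa [add_eq_right] at h
  have e3 : ∑ m ∈ Finset.range (q'+1),
      (((q'+1).choose (m+1) : ℤ) * 3^(r*(m+1))) * (C^(m+1)) i j = 0 := by
    have h := congrFun (congrFun e2 i) j
    simpa only [Matrix.sum_apply, Matrix.smul_apply, smul_eq_mul, Matrix.zero_apply] using h
  rw [Finset.sum_range_succ'] at e3
  simp only [Nat.choose_one_right, Nat.mul_one, pow_one, zero_add] at e3
  -- e3 : ∑ m ∈ range q', choose(m+2) * 3^(r*(m+2)) * (C^(m+2)) i j + (q'+1) * 3^r * C i j = 0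
  have e4 : (3:ℤ)^(if q' + 1 = 3 then r+2 else r+1) ∣ ((q'+1 : ℕ) : ℤ) * 3^r * C i j := by
    have heq : ((q'+1:ℕ):ℤ) * 3^r * C i j
        = -∑ m ∈ Finset.range q',
            (((q'+1).choose (m+1+1) : ℤ) * 3^(r*(m+1+1))) * (C^(m+1+1)) i j := by
      linear_combination e3
    rw [heq, dvd_neg]
    refine Finset.dvd_sum fun m hm => ?_
    split_ifs with h3
    · have hq' : q' = 2 := by omega
      subst hq'
      rw [Finset.mem_range] at hm
      interval_cases m
      · norm_num
        have h30 : (3:ℤ) * 3^(r*2) = 3^(r*2+1) := by rw [pow_succ, mul_comm]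
        calc (3:ℤ)^(r+2) ∣ 3 * 3^(r*2) := by rw [h30]; exact pow_dvd_pow 3 (by omega)
        _ ∣ 3 * 3^(r*2) * (C^2) i j := dvd_mul_right _ _
      · norm_num
        calc (3:ℤ)^(r+2) ∣ 3^(r*3) := pow_dvd_pow 3 (by omega)
        _ ∣ 3^(r*3) * (C^3) i j := dvd_mul_right _ _
    · have hle : r + 1 ≤ r * (m+1+1) := by nlinarith
      exact dvd_mul_of_dvd_left (Dvd.dvd.mul_left (pow_dvd_pow 3 hle) _) _
  by_cases h3 : q' + 1 = 3
  · rw [if_pos h3] at e4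
    have h6 : ((q'+1:ℕ):ℤ) * 3^r * C i j = 3^(r+1) * C i j := by
      rw [h3]; push_cast; ring
    rw [h6, show r+2 = (r+1)+1 from rfl, pow_succ] at e4
    exact (mul_dvd_mul_iff_left (pow_ne_zero (r+1) (by norm_num : (3:ℤ) ≠ 0))).mp e4
  · rw [if_neg h3] at e4
    have h6 : ((q'+1:ℕ):ℤ) * 3^r * C i j = 3^r * (((q'+1:ℕ):ℤ) * C i j) := by ring
    rw [h6, pow_succ] at e4
    have h7 : (3:ℤ) ∣ ((q'+1:ℕ):ℤ) * C i j :=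
      (mul_dvd_mul_iff_left (pow_ne_zero r (by norm_num : (3:ℤ) ≠ 0))).mp e4
    rcases ((by norm_num : Prime (3:ℤ)).dvd_mul.mp h7) with h | h
    · exfalso
      have hd : (3:ℕ) ∣ q' + 1 := by exact_mod_cast h
      exact h3 ((Nat.prime_dvd_prime_iff_eq Nat.prime_three hq).mp hd).symm
    · exact h

lemma dvd_all_pow_three (x : ℤ) (h : ∀ r : ℕ, 1 ≤ r → (3:ℤ)^r ∣ x) : x = 0 := by
  by_contra hx
  have h1 := Int.le_of_dvd (abs_pos.mpr hx) ((dvd_abs _ _).mpr (h (x.natAbs + 1) (by omega)))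
  have h2 : (x.natAbs : ℤ) < 3^(x.natAbs + 1) := by
    have := Nat.lt_pow_self (n := x.natAbs + 1) (by norm_num : 1 < 3)
    calc (x.natAbs : ℤ) < ((x.natAbs + 1 : ℕ) : ℤ) := by exact_mod_cast Nat.lt_succ_self _
    _ < ((3^(x.natAbs+1) : ℕ) : ℤ) := by exact_mod_cast this
    _ = 3^(x.natAbs+1) := by push_cast; ring
  rw [Int.abs_eq_natAbs] at h1
  exact absurd h1 (not_le.mpr h2)

lemma prime_one {q : ℕ} (hq : q.Prime) (B : Matrix ι ι ℤ) (hB : B ^ q = 1)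
    (hred : ∀ i j, (3:ℤ) ∣ (B - 1) i j) : B = 1 := by
  have hall : ∀ r : ℕ, 1 ≤ r → ∀ i j, (3:ℤ)^r ∣ (B - 1) i j := by
    intro r
    induction r with
    | zero => omega
    | succ r ih =>
      intro _ i j
      rcases Nat.eq_zero_or_pos r with hr0 | hr1
      · subst hr0; simpa using hred i j
      · set C : Matrix ι ι ℤ := Matrix.of fun i j => (B - 1) i j / 3^r with hC
        have hBC : B = 1 + (3:ℤ)^r • C := by
          ext a b
          have := Int.ediv_mul_cancel (ih hr1 a b)
          simp only [Matrix.add_apply, Matrix.smul_apply, hC, Matrix.of_apply, smul_eq_mul]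
          rw [mul_comm, this]
          simp [Matrix.sub_apply]
        have hstep := step hq hr1 C (by rw [← hBC]; exact hB) i j
        have : (B - 1) i j = 3^r * C i j := by
          simp only [hC, Matrix.of_apply]
          rw [mul_comm, Int.ediv_mul_cancel (ih hr1 i j)]
        rw [this, pow_succ]
        exact mul_dvd_mul (dvd_refl _) hstep
  have : ∀ i j, (B - 1) i j = 0 := fun i j => dvd_all_pow_three _ (fun r hr => hall r hr i j)
  have hB1 : B - 1 = 0 := by ext i j; exact this i j
  linear_combination (norm := (ext i j; simp [Matrix.sub_apply])) hB1

theorem red3_eq_one {A : Matrix ι ι ℤ} {k : ℕ} (hk : k ≠ 0) (hA : A ^ k = 1)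
    (hred : ∀ i j, (3:ℤ) ∣ (A - 1) i j) : A = 1 := by
  by_contra hA1
  have hfin : IsOfFinOrder A := isOfFinOrder_iff_pow_eq_one.mpr ⟨k, Nat.pos_of_ne_zero hk, hA⟩
  set m := orderOf A with hm
  have hm1 : m ≠ 1 := fun h => hA1 (orderOf_eq_one_iff.mp h)
  have hm0 : 0 < m := hfin.orderOf_pos
  set q := m.minFac with hqdef
  have hq : q.Prime := Nat.minFac_prime hm1
  have hqd : q ∣ m := Nat.minFac_dvd m
  set B := A ^ (m / q) with hB
  have hBq : B ^ q = 1 := by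
    rw [hB, ← pow_mul, Nat.div_mul_cancel hqd, hm, pow_orderOf_eq_one]
  have hBred : ∀ i j, (3:ℤ) ∣ (B - 1) i j := by
    have h1 : redMap ι 3 A = 1 := (redMap_eq_one_iff 3 A).mpr (by exact_mod_cast hred)
    have h2 : redMap ι 3 B = 1 := by rw [hB, map_pow, h1, one_pow]
    have := (redMap_eq_one_iff 3 B).mp h2
    exact_mod_cast this
  have hBone : B = 1 := prime_one hq B hBq hBred
  have hdvd : m ∣ m / q := orderOf_dvd_of_pow_eq_one (by rw [← hB, hBone])
  have hlt : m / q < m := Nat.div_lt_self hm0 hq.one_lt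
  have hpos : 0 < m / q := Nat.div_pos (Nat.le_of_dvd hm0 hqd) hq.pos
  exact absurd (Nat.le_of_dvd hpos hdvd) (not_le.mpr hlt)

theorem main (n : ℕ) :
    HasBoundedFiniteSubgroupsWith (Matrix.GeneralLinearGroup (Fin n) ℚ) (3^(n*n)) := by
  intro H hH
  classical
  set V := (Fin n → ℚ) with hV
  set S : Set V := ⋃ g : H, Set.range fun i : Fin n =>
      ((g : Matrix.GeneralLinearGroup (Fin n) ℚ) : Matrix (Fin n) (Fin n) ℚ).mulVec
        (Pi.single i 1) with hS
  have hSfin : S.Finite := Set.finite_iUnion fun g => Set.finite_range _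
  set L : Submodule ℤ V := Submodule.span ℤ S with hL
  have hmemS : ∀ (g : H) (i : Fin n),
      ((g : Matrix.GeneralLinearGroup (Fin n) ℚ) : Matrix (Fin n) (Fin n) ℚ).mulVec
        (Pi.single i 1) ∈ S := by
    intro g i
    exact Set.mem_iUnion.mpr ⟨g, Set.mem_range_self i⟩
  have hsingle : ∀ i : Fin n, Pi.single i (1:ℚ) ∈ L := by
    intro i
    have h2 := Submodule.subset_span (R := ℤ) (hmemS 1 i)
    rw [hL]
    simpa only [OneMemClass.coe_one, Units.val_one, Matrix.one_mulVec, SetLike.mem_coe] using h2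
  have hinv : ∀ (g : H), ∀ x ∈ L,
      ((g : Matrix.GeneralLinearGroup (Fin n) ℚ) : Matrix (Fin n) (Fin n) ℚ).mulVec x ∈ L := by
    intro g x hx
    set f : V →ₗ[ℤ] V :=
      (((g : Matrix.GeneralLinearGroup (Fin n) ℚ) : Matrix (Fin n) (Fin n) ℚ).mulVecLin).restrictScalars ℤ with hf
    have : Submodule.map f L ≤ L := by
      rw [hL, Submodule.map_span]
      refine Submodule.span_le.mpr ?_
      rintro _ ⟨y, hy, rfl⟩
      rcases Set.mem_iUnion.mp hy with ⟨h, i, rfl⟩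
      refine Submodule.subset_span ?_
      have : f (((h : Matrix.GeneralLinearGroup (Fin n) ℚ) : Matrix (Fin n) (Fin n) ℚ).mulVec
          (Pi.single i 1)) = (((g * h : H) : Matrix.GeneralLinearGroup (Fin n) ℚ) :
            Matrix (Fin n) (Fin n) ℚ).mulVec (Pi.single i 1) := by
        simp only [hf, LinearMap.restrictScalars_apply, Matrix.mulVecLin_apply,
          Subgroup.coe_mul, Units.val_mul]
        rw [Matrix.mulVecLin_apply, Matrix.mulVec_mulVec]
      rw [this]
      exact hmemS (g*h) i
    exact this (Submodule.mem_map_of_mem hx)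
  haveI hLfin : Module.Finite ℤ L := Module.Finite.iff_fg.mpr (Submodule.fg_span hSfin)
  haveI hLfree : Module.Free ℤ L := Module.free_of_finite_type_torsion_free'
  set κ := Module.Free.ChooseBasisIndex ℤ L with hκ
  set b : Basis κ ℤ L := Module.Free.chooseBasis ℤ L with hb
  set v : κ → V := fun k => (b k : V) with hv
  have hli : LinearIndependent ℚ v := by
    rw [← LinearIndependent.iff_fractionRing (R := ℤ) (K := ℚ)]
    exact b.linearIndependent.map' L.subtype (Submodule.ker_subtype L)
  have hLv : L = Submodule.span ℤ (Set.range v) := by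
    conv_lhs => rw [← Submodule.map_subtype_top L]
    rw [← b.span_eq, Submodule.map_span]
    congr 1
    ext x
    simp [hv, Set.range_comp]
  have hsp : Submodule.span ℚ (Set.range v) = ⊤ := by
    rw [eq_top_iff]
    intro x _
    have hx : x ∈ Submodule.span ℚ (Set.range (fun i : Fin n => Pi.single i (1:ℚ))) := by
      have := (Pi.basisFun ℚ (Fin n)).span_eq
      rw [show Set.range (fun i : Fin n => Pi.single i (1:ℚ)) = Set.range (Pi.basisFun ℚ (Fin n))
        from by ext y; simp [Pi.basisFun_apply], this]
      trivial
    refine Submodule.span_le.mpr ?_ hx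
    rintro _ ⟨i, rfl⟩
    have h1 : Pi.single i (1:ℚ) ∈ Submodule.span ℤ (Set.range v) := hLv ▸ hsingle i
    exact Submodule.span_le_restrictScalars ℤ ℚ (Set.range v) h1
  haveI : Fintype κ := Module.Free.ChooseBasisIndex.fintype ℤ L
  set bV : Basis κ ℚ V := Basis.mk hli (le_of_eq hsp.symm) with hbV
  have hcard : Fintype.card κ = n := by
    have h1 := Module.finrank_eq_card_basis bV
    rw [show Module.finrank ℚ V = n from ?_] at h1
    · exact h1.symm
    · exact Module.finrank_fin_fun ℚ
  set lf : ↥H → (L →ₗ[ℤ] L) := fun g =>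
    LinearMap.restrict
      ((((g : Matrix.GeneralLinearGroup (Fin n) ℚ) : Matrix (Fin n) (Fin n) ℚ).mulVecLin).restrictScalars ℤ)
      (hinv g) with hlf
  have hlf_apply : ∀ (g : ↥H) (x : L), ((lf g x : V)) =
      ((g : Matrix.GeneralLinearGroup (Fin n) ℚ) : Matrix (Fin n) (Fin n) ℚ).mulVec (x : V) :=
    fun g x => rfl
  have hlmul : ∀ g g' : ↥H, lf (g * g') = (lf g).comp (lf g') := by
    intro g g'
    apply LinearMap.ext
    intro x
    rw [LinearMap.comp_apply]
    apply Subtype.ext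
    rw [hlf_apply, hlf_apply, hlf_apply, Matrix.mulVec_mulVec]
    congr 1
  have hlone : lf 1 = LinearMap.id := by
    apply LinearMap.ext
    intro x
    apply Subtype.ext
    rw [hlf_apply]
    simp
  set φ : ↥H → Matrix κ κ ℤ := fun g => LinearMap.toMatrix b b (lf g) with hφ
  have hφmul : ∀ g g' : ↥H, φ (g * g') = φ g * φ g' := by
    intro g g'
    rw [hφ]
    simp only
    rw [hlmul, LinearMap.toMatrix_comp b b b]
  have hφone : φ 1 = 1 := by
    rw [hφ]
    simp only
    rw [hlone, LinearMap.toMatrix_id]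
  have hφpow : ∀ (g : ↥H) (k : ℕ), φ (g ^ k) = (φ g) ^ k := by
    intro g k
    induction k with
    | zero => simpa using hφone
    | succ k ih => rw [pow_succ, pow_succ, hφmul, ih]
  set f : ↥H → Matrix κ κ (ZMod 3) := fun g => redMap κ 3 (φ g) with hfdef
  have hfmul : ∀ g g' : ↥H, f (g * g') = f g * f g' := by
    intro g g'
    rw [hfdef]
    simp only
    rw [hφmul, map_mul]
  have hker : ∀ g : ↥H, f g = 1 → g = 1 := by
    intro g hg
    haveI : Nonempty ↥H := ⟨1⟩
    have hcardH : Nat.card ↥H ≠ 0 := Nat.card_pos.ne'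
    have hpowc : (φ g) ^ (Nat.card ↥H) = 1 := by
      rw [← hφpow, pow_card_eq_one', hφone]
    have hred : ∀ i j, (3:ℤ) ∣ ((φ g) - 1) i j := by
      have := (redMap_eq_one_iff 3 (φ g)).mp hg
      exact_mod_cast this
    have hφ1 : φ g = 1 := red3_eq_one hcardH hpowc hred
    have hl : lf g = LinearMap.id := by
      apply (LinearMap.toMatrix b b).injective
      rw [LinearMap.toMatrix_id]
      exact hφ1
    have hact : ∀ x, ∀ hx : x ∈ L,
        ((g : Matrix.GeneralLinearGroup (Fin n) ℚ) : Matrix (Fin n) (Fin n) ℚ).mulVec x = x := by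
      intro x hx
      have h1 : lf g ⟨x, hx⟩ = ⟨x, hx⟩ := by rw [hl]; rfl
      have h2 := congrArg Subtype.val h1
      rw [hlf_apply] at h2
      exact h2
    have hg1 : ((g : Matrix.GeneralLinearGroup (Fin n) ℚ) : Matrix (Fin n) (Fin n) ℚ) = 1 := by
      ext i j
      have h3 := congrFun (hact (Pi.single j 1) (hsingle j)) i
      simpa [Matrix.mulVec, dotProduct, Pi.single_apply, Matrix.one_apply] using h3
    have : (g : Matrix.GeneralLinearGroup (Fin n) ℚ) = 1 := Units.ext hg1
    exact Subtype.ext (by rw [this]; rfl)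
  have hinj : Function.Injective f := by
    intro g g' hgg
    have h1 : f (g'⁻¹ * g) = 1 := by
      rw [hfmul, hgg, ← hfmul, inv_mul_cancel]
      calc f 1 = redMap κ 3 (φ 1) := rfl
      _ = 1 := by rw [hφone, map_one]
    have h2 := hker _ h1
    rw [inv_mul_eq_one] at h2
    exact h2.symm
  calc Nat.card ↥H ≤ Nat.card (Matrix κ κ (ZMod 3)) :=
        Nat.card_le_card_of_injective f hinj
  _ = 3^(n*n) := by
    rw [Nat.card_eq_fintype_card, show Fintype.card (Matrix κ κ (ZMod 3))
      = Fintype.card (κ → κ → ZMod 3) from Fintype.card_congr Matrix.of.symm]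
    rw [Fintype.card_fun, Fintype.card_fun, ZMod.card, hcard, ← pow_mul]

end Minkowski

theorem stmt_8 (n : ℕ) : HasBoundedFiniteSubgroups (Matrix.GeneralLinearGroup (Fin n) ℚ) :=
  ⟨3^(n*n), main n⟩
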